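/- Let V be a finite linearly ordered set, K a finite abstract simplicial complex on V, and c a 1-cycle of K with real coefficients whose homology class is nonzero (c is not a boundary). Then the minimum cardinality of a homological edge cut for c equals the minimum of ‖φ‖_0 over all 1-cochains φ : K^(1) → ℝ satisfying φ(∂_2 σ) = 0 for every 2-simplex σ ∈ K^(2) and φ(c) = 1, where ‖φ‖_0 denotes the number of edges e ∈ K^(1) with φ(e) ≠ 0. Moreover, the support of any 1-cochain attaining this minimum is a minimum homological edge cut for c. -/
import Mathlib


open Finset

variable {V : Type*} [Fintype V] [LinearOrder V]

/-- `K` is a finite abstract simplicial complex on `V`: a collection of nonempty finite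
subsets of `V` closed under passing to nonempty subsets. -/
def IsComplex (K : Finset (Finset V)) : Prop :=
  (∀ σ ∈ K, σ.Nonempty) ∧ ∀ σ ∈ K, ∀ τ ⊆ σ, τ.Nonempty → τ ∈ K

/-- The set `K^(p)` of `p`-simplices of `K` (members of cardinality `p+1`). -/
def pSimplices (K : Finset (Finset V)) (p : ℕ) : Finset (Finset V) :=
  K.filter fun σ => σ.card = p + 1

/-- The indicator `p`-chain of a `p`-simplex `σ`. -/
def ind (F : Type*) [Zero F] [One F] (σ : Finset V) : Finset V → F :=
  fun τ => if τ = σ then 1 else 0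

/-- The simplicial boundary operator on chains (with respect to the linear order on `V`):
the indicator of a simplex `{v_0 < … < v_p}` is sent to
`Σ_{i} (−1)^i · indicator of {v_0,…,v_p} \ {v_i}`.  Equivalently, the coefficient of a
chain's boundary at a face `σ` is `Σ_{v ∉ σ} (−1)^{#{u ∈ σ : u < v}} · c (σ ∪ {v})`. -/
def bdry {F : Type*} [CommRing F] (c : Finset V → F) : Finset V → F :=
  fun σ => ∑ v ∈ σᶜ, (-1 : F) ^ (σ.filter fun u => u < v).card * c (insert v σ)

/-- Evaluation of a cochain `φ` on a chain `c`, extended bilinearly. -/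
def evalC {F : Type*} [CommRing F] (φ c : Finset V → F) : F :=
  ∑ σ : Finset V, φ σ * c σ

/-- `c` is a `p`-chain of `K`: it is supported on the `p`-simplices of `K`. -/
def suppIn {F : Type*} [Zero F] (K : Finset (Finset V)) (p : ℕ) (c : Finset V → F) : Prop :=
  ∀ σ : Finset V, c σ ≠ 0 → σ ∈ K ∧ σ.card = p + 1

/-- `c` is a `p`-cycle of `K`. -/
def IsCycleOf {F : Type*} [CommRing F] (K : Finset (Finset V)) (p : ℕ)
    (c : Finset V → F) : Prop :=
  suppIn K p c ∧ bdry c = 0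

/-- Two `p`-chains are homologous in `K` if their difference is the boundary of a
`(p+1)`-chain of `K`. -/
def HomologousIn {F : Type*} [CommRing F] (K : Finset (Finset V)) (p : ℕ)
    (c₁ c₂ : Finset V → F) : Prop :=
  ∃ b : Finset V → F, suppIn K (p + 1) b ∧ c₁ - c₂ = bdry b

/-- `K − C`: the subcomplex of all simplices of `K` having no subset belonging to `C`. -/
def deleteSimps (K C : Finset (Finset V)) : Finset (Finset V) :=
  K.filter fun σ => ∀ τ ∈ C, ¬ τ ⊆ σ

/-- `C` is a homological cut for the 1-cycle `c`: no 1-cycle of `K − C` is homologous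
to `c` in `K`. -/
def IsHomCut {F : Type*} [CommRing F] (K C : Finset (Finset V)) (c : Finset V → F) : Prop :=
  ¬ ∃ z : Finset V → F, IsCycleOf (deleteSimps K C) 1 z ∧ HomologousIn K 1 z c

set_option linter.unusedSectionVars false

noncomputable def bdryL : (Finset V → ℝ) →ₗ[ℝ] (Finset V → ℝ) :=
  LinearMap.pi fun σ => ∑ v ∈ σᶜ,
    ((-1 : ℝ) ^ (σ.filter fun u => u < v).card) • LinearMap.proj (insert v σ)

lemma bdryL_apply (c : Finset V → ℝ) : bdryL c = bdry c := by
  funext σ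
  simp [bdryL, bdry, smul_eq_mul]

noncomputable def evalCL (φ : Finset V → ℝ) : (Finset V → ℝ) →ₗ[ℝ] ℝ :=
  ∑ σ : Finset V, φ σ • LinearMap.proj σ

lemma evalCL_apply (φ c : Finset V → ℝ) : evalCL φ c = evalC φ c := by
  simp [evalCL, evalC, smul_eq_mul]

lemma sum_smul_ind (b : Finset V → ℝ) : ∑ σ : Finset V, b σ • ind ℝ σ = b := by
  funext τ
  simp [ind, Finset.sum_apply, mul_ite, Finset.sum_ite_eq]

lemma filter_lt_insert_card (σ : Finset V) {v : V} (w : V) (hv : v ∉ σ) :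
    ((insert v σ).filter fun u => u < w).card
      = (σ.filter fun u => u < w).card + (if v < w then 1 else 0) := by
  rw [Finset.filter_insert]
  split_ifs with h
  · rw [Finset.card_insert_of_notMem (by simp [hv])]
  · simp

lemma bdry_bdry (b : Finset V → ℝ) : bdry (bdry b) = 0 := by
  funext σ
  show (∑ v ∈ σᶜ, (-1:ℝ) ^ (σ.filter fun u => u < v).card * bdry b (insert v σ)) = 0
  simp only [bdry, Finset.mul_sum]
  rw [Finset.sum_sigma']
  refine Finset.sum_involution (fun p _ => ⟨p.2, p.1⟩) ?_ ?_ ?_ ?_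
  · rintro ⟨v, w⟩ hp
    simp only [Finset.mem_sigma, Finset.mem_compl, Finset.mem_insert, not_or] at hp
    obtain ⟨hv, hwv, hw⟩ := hp
    dsimp only
    rw [filter_lt_insert_card σ w hv, filter_lt_insert_card σ v hw,
      Finset.insert_comm w v σ]
    rcases lt_or_gt_of_ne (Ne.symm hwv) with h | h
    · rw [if_pos h, if_neg (asymm h)]
      simp only [pow_add, pow_one, pow_zero]
      ring
    · rw [if_neg (asymm h), if_pos h]
      simp only [pow_add, pow_one, pow_zero]
      ring
  · rintro ⟨v, w⟩ hp - h
    simp only [Finset.mem_sigma, Finset.mem_compl, Finset.mem_insert, not_or] at hp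
    exact hp.2.1 (congrArg Sigma.fst h)
  · rintro ⟨v, w⟩ hp
    simp only [Finset.mem_sigma, Finset.mem_compl, Finset.mem_insert, not_or] at hp ⊢
    exact ⟨hp.2.2, Ne.symm hp.2.1, hp.1⟩
  · rintro ⟨v, w⟩ hp
    rfl

lemma exists_functional {W : Submodule ℝ (Finset V → ℝ)} {c : Finset V → ℝ} (hc : c ∉ W) :
    ∃ f : (Finset V → ℝ) →ₗ[ℝ] ℝ, (∀ x ∈ W, f x = 0) ∧ f c = 1 := by
  have h : W.mkQ c ≠ 0 := by
    simpa [Submodule.mkQ_apply, Submodule.Quotient.mk_eq_zero] using hc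
  obtain ⟨g, hg⟩ : ∃ g : Module.Dual ℝ ((Finset V → ℝ) ⧸ W), g (W.mkQ c) ≠ 0 := by
    by_contra hcon; push_neg at hcon
    exact h ((Module.forall_dual_apply_eq_zero_iff ℝ _).mp hcon)
  refine ⟨(g (W.mkQ c))⁻¹ • (g ∘ₗ W.mkQ), fun x hx => ?_, ?_⟩
  · have : W.mkQ x = 0 := by
      simpa [Submodule.mkQ_apply, Submodule.Quotient.mk_eq_zero] using hx
    simp [this]
  · simp only [LinearMap.smul_apply, LinearMap.coe_comp, Function.comp_apply, smul_eq_mul]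
    exact inv_mul_cancel₀ hg

lemma evalC_of_functional (f : (Finset V → ℝ) →ₗ[ℝ] ℝ) (x : Finset V → ℝ) :
    evalC (fun σ => f (ind ℝ σ)) x = f x := by
  conv_rhs => rw [← sum_smul_ind x]
  rw [map_sum]
  refine Finset.sum_congr rfl fun σ _ => ?_
  rw [map_smul, smul_eq_mul, mul_comm]

lemma support_isHomCut (K : Finset (Finset V)) (φ c : Finset V → ℝ)
    (hφ2 : ∀ σ ∈ pSimplices K 2, evalC φ (bdry (ind ℝ σ)) = 0) (hφc : evalC φ c = 1) :
    IsHomCut K ((pSimplices K 1).filter fun e => φ e ≠ 0) c := by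
  rintro ⟨z, ⟨hzsupp, -⟩, b, hbsupp, hzc⟩
  have hz0 : evalC φ z = 0 := by
    refine Finset.sum_eq_zero fun σ _ => ?_
    by_cases hσ : z σ = 0
    · simp [hσ]
    · obtain ⟨hσK, hσ2⟩ := hzsupp σ hσ
      rw [deleteSimps, Finset.mem_filter] at hσK
      have hφσ : φ σ = 0 := by
        by_contra hφσ
        exact hσK.2 σ (Finset.mem_filter.mpr
          ⟨Finset.mem_filter.mpr ⟨hσK.1, hσ2⟩, hφσ⟩) (subset_refl σ)
      simp [hφσ]
  have hb0 : evalC φ (bdry b) = 0 := by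
    have hb : bdry b = bdryL (∑ σ : Finset V, b σ • ind ℝ σ) := by
      rw [sum_smul_ind, bdryL_apply]
    rw [← evalCL_apply, hb, map_sum, map_sum]
    refine Finset.sum_eq_zero fun σ _ => ?_
    rw [map_smul, map_smul, smul_eq_mul]
    by_cases hσ : b σ = 0
    · simp [hσ]
    · obtain ⟨hσK, hσ3⟩ := hbsupp σ hσ
      have : evalCL φ (bdryL (ind ℝ σ)) = 0 := by
        rw [bdryL_apply, evalCL_apply]
        exact hφ2 σ (Finset.mem_filter.mpr ⟨hσK, hσ3⟩)
      rw [this, mul_zero]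
  have := congrArg (evalC φ) hzc
  rw [← evalCL_apply, map_sub, evalCL_apply, evalCL_apply, hz0, hφc, hb0] at this
  norm_num at this

lemma exists_phi (K C : Finset (Finset V)) (hCK : C ⊆ pSimplices K 1)
    (c : Finset V → ℝ) (hc : IsCycleOf K 1 c) (hcut : IsHomCut K C c) :
    ∃ φ : Finset V → ℝ,
      (∀ σ ∈ pSimplices K 2, evalC φ (bdry (ind ℝ σ)) = 0) ∧ evalC φ c = 1 ∧
      ((pSimplices K 1).filter fun e => φ e ≠ 0) ⊆ C := by
  classical
  set S1 : Set (Finset V → ℝ) := (fun σ => bdry (ind ℝ σ)) '' ↑(pSimplices K 2) with hS1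
  set S2 : Set (Finset V → ℝ) :=
    (fun e => ind ℝ e) '' ↑(pSimplices (deleteSimps K C) 1) with hS2
  set W : Submodule ℝ (Finset V → ℝ) := Submodule.span ℝ (S1 ∪ S2) with hW
  have hcW : c ∉ W := by
    intro hmem
    rw [hW, Submodule.span_union] at hmem
    obtain ⟨y, hy, z, hz, hyzc⟩ := Submodule.mem_sup.mp hmem
    -- y is a boundary
    rw [hS1, Set.image_eq_range] at hy
    obtain ⟨a, ha⟩ := (Submodule.mem_span_range_iff_exists_fun ℝ).mp hy
    set b : Finset V → ℝ := ∑ i : ↥(pSimplices K 2), a i • ind ℝ (i : Finset V) with hb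
    have hbb : bdry b = y := by
      rw [← bdryL_apply, hb, map_sum, ← ha]
      refine Finset.sum_congr rfl fun i _ => ?_
      rw [map_smul, bdryL_apply]
    have hbsupp : suppIn K 2 b := by
      intro σ hσ
      by_contra hcon
      apply hσ
      rw [hb, Finset.sum_apply]
      refine Finset.sum_eq_zero fun i _ => ?_
      have hne : σ ≠ (i : Finset V) := by
        intro h
        have hm : σ ∈ pSimplices K 2 := by rw [h]; exact_mod_cast i.2
        rw [pSimplices, Finset.mem_filter] at hm
        exact hcon hm
      simp [ind, hne]
    -- z is a chain of K − C
    rw [hS2, Set.image_eq_range] at hz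
    obtain ⟨d, hd⟩ := (Submodule.mem_span_range_iff_exists_fun ℝ).mp hz
    have hzsupp : suppIn (deleteSimps K C) 1 z := by
      intro σ hσ
      by_contra hcon
      apply hσ
      rw [← hd, Finset.sum_apply]
      refine Finset.sum_eq_zero fun i _ => ?_
      have hne : σ ≠ (i : Finset V) := by
        intro h
        have hm : σ ∈ pSimplices (deleteSimps K C) 1 := by rw [h]; exact_mod_cast i.2
        rw [pSimplices, Finset.mem_filter] at hm
        exact hcon hm
      simp [ind, hne]
    have hzeq : z = c - bdry b := by
      rw [hbb]; rw [← hyzc]; ring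
    have hzcyc : bdry z = 0 := by
      rw [hzeq, ← bdryL_apply, map_sub, bdryL_apply, bdryL_apply, hc.2, bdry_bdry, sub_zero]
    refine hcut ⟨z, ⟨hzsupp, hzcyc⟩, ⟨-b, ?_, ?_⟩⟩
    · intro σ hσ
      exact hbsupp σ (by simpa using hσ)
    · have : bdry (-b) = -(bdry b) := by
        rw [← bdryL_apply, map_neg, bdryL_apply]
      rw [this, hzeq]; ring
  obtain ⟨f, hf0, hfc⟩ := exists_functional hcW
  refine ⟨fun σ => f (ind ℝ σ), ?_, ?_, ?_⟩
  · intro σ hσ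
    rw [evalC_of_functional]
    exact hf0 _ (Submodule.subset_span (Or.inl ⟨σ, by simpa using hσ, rfl⟩))
  · rw [evalC_of_functional]; exact hfc
  · intro e he
    rw [Finset.mem_filter] at he
    obtain ⟨he1, hφe⟩ := he
    by_contra heC
    apply hφe
    have hedel : e ∈ pSimplices (deleteSimps K C) 1 := by
      rw [pSimplices, Finset.mem_filter] at he1 ⊢
      refine ⟨Finset.mem_filter.mpr ⟨he1.1, fun τ hτ hsub => ?_⟩, he1.2⟩
      have hτ2 := hCK hτ
      rw [pSimplices, Finset.mem_filter] at hτ2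
      have : τ = e := Finset.eq_of_subset_of_card_le hsub (by omega)
      exact heC (this ▸ hτ)
    exact hf0 _ (Submodule.subset_span (Or.inr ⟨e, by simpa using hedel, rfl⟩))

/-- Proposition 6.2, PROP:ell0.
Let `K` be a finite abstract simplicial complex on a finite linearly ordered set `V` and `c`
a 1-cycle of `K` over `ℝ` whose homology class is nonzero (`c` is not a boundary).  Then the
minimum cardinality of a homological edge cut for `c` equals the minimum of `‖φ‖_0` over all
1-cochains `φ` with `φ(∂_2 σ) = 0` for every `σ ∈ K^(2)` and `φ(c) = 1`, where `‖φ‖_0` is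
the number of edges `e ∈ K^(1)` with `φ e ≠ 0`.  Moreover, the support of any 1-cochain
attaining this minimum is a minimum homological edge cut for `c`. -/
theorem stmt_9 {V : Type*} [Fintype V] [LinearOrder V]
    (K : Finset (Finset V)) (hK : IsComplex K) (c : Finset V → ℝ) (hc : IsCycleOf K 1 c)
    (hnb : ¬ ∃ b : Finset V → ℝ, suppIn K 2 b ∧ bdry b = c) :
    sInf { n : ℕ | ∃ C : Finset (Finset V),
        C ⊆ pSimplices K 1 ∧ IsHomCut K C c ∧ C.card = n } =
      sInf { n : ℕ | ∃ φ : Finset V → ℝ,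
        (∀ σ ∈ pSimplices K 2, evalC φ (bdry (ind ℝ σ)) = 0) ∧ evalC φ c = 1 ∧
        ((pSimplices K 1).filter fun e => φ e ≠ 0).card = n } ∧
    ∀ φ : Finset V → ℝ,
      (∀ σ ∈ pSimplices K 2, evalC φ (bdry (ind ℝ σ)) = 0) → evalC φ c = 1 →
      ((pSimplices K 1).filter fun e => φ e ≠ 0).card =
        sInf { n : ℕ | ∃ φ' : Finset V → ℝ,
          (∀ σ ∈ pSimplices K 2, evalC φ' (bdry (ind ℝ σ)) = 0) ∧ evalC φ' c = 1 ∧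
          ((pSimplices K 1).filter fun e => φ' e ≠ 0).card = n } →
      (IsHomCut K ((pSimplices K 1).filter fun e => φ e ≠ 0) c ∧
        ((pSimplices K 1).filter fun e => φ e ≠ 0).card =
          sInf { n : ℕ | ∃ C : Finset (Finset V),
            C ⊆ pSimplices K 1 ∧ IsHomCut K C c ∧ C.card = n }) := by
  classical
  have hfull : IsHomCut K (pSimplices K 1) c := by
    rintro ⟨z, ⟨hzsupp, -⟩, b, hbsupp, hzc⟩
    have hz : z = 0 := by
      funext σ
      by_contra h
      obtain ⟨hσ, hσ2⟩ := hzsupp σ (by simpa using h)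
      rw [deleteSimps, Finset.mem_filter] at hσ
      exact hσ.2 σ (Finset.mem_filter.mpr ⟨hσ.1, hσ2⟩) (subset_refl σ)
    apply hnb
    rw [hz] at hzc
    refine ⟨-b, fun σ hσ => hbsupp σ (by simpa using hσ), ?_⟩
    have hneg : bdry (-b) = -(bdry b) := by rw [← bdryL_apply, map_neg, bdryL_apply]
    rw [hneg, ← hzc]; ring
  set A := { n : ℕ | ∃ C : Finset (Finset V),
      C ⊆ pSimplices K 1 ∧ IsHomCut K C c ∧ C.card = n } with hA
  set B := { n : ℕ | ∃ φ : Finset V → ℝ,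
      (∀ σ ∈ pSimplices K 2, evalC φ (bdry (ind ℝ σ)) = 0) ∧ evalC φ c = 1 ∧
      ((pSimplices K 1).filter fun e => φ e ≠ 0).card = n } with hB
  have hAne : A.Nonempty := ⟨(pSimplices K 1).card, pSimplices K 1, subset_rfl, hfull, rfl⟩
  have hBne : B.Nonempty := by
    obtain ⟨φ, h1, h2, h3⟩ := exists_phi K (pSimplices K 1) subset_rfl c hc hfull
    exact ⟨_, φ, h1, h2, rfl⟩
  have hAB : sInf A ≤ sInf B := by
    obtain ⟨φ, h1, h2, h3⟩ := Nat.sInf_mem hBne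
    exact Nat.sInf_le ⟨_, Finset.filter_subset _ _, support_isHomCut K φ c h1 h2, h3⟩
  have hBA : sInf B ≤ sInf A := by
    obtain ⟨C, hC1, hC2, hC3⟩ := Nat.sInf_mem hAne
    obtain ⟨φ, h1, h2, h3⟩ := exists_phi K C hC1 c hc hC2
    calc sInf B ≤ ((pSimplices K 1).filter fun e => φ e ≠ 0).card :=
          Nat.sInf_le ⟨φ, h1, h2, rfl⟩
      _ ≤ C.card := Finset.card_le_card h3
      _ = sInf A := hC3
  refine ⟨le_antisymm hAB hBA, ?_⟩
  intro φ h1 h2 h3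
  refine ⟨support_isHomCut K φ c h1 h2, ?_⟩
  rw [h3]
  exact (le_antisymm hAB hBA).symm
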